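/- Let n ≥ 2, ε, φ ∈ ℝ, and θ ∈ (0, π). The number λ = 2 cos θ is an eigenvalue of T_{n,ε,φ} if and only if sin((n+1)θ) − (ε + φ) sin(nθ) + εφ sin((n−1)θ) = 0. In that case, the vector v ∈ ℝ^n with entries v_i = sin(iθ) − ε sin((i−1)θ), i = 1, …, n, is nonzero and satisfies T_{n,ε,φ} v = λ v. -/

import Mathlib

open Matrix Real Filter

/-- The n×n tridiagonal matrix `T_{n,ε,φ}` with `(T)_{11} = ε`, `(T)_{nn} = φ`,
zero elsewhere on the diagonal, and ones on the first super- and subdiagonals. -/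
noncomputable def Ttri (n : ℕ) (e f : ℝ) : Matrix (Fin n) (Fin n) ℝ :=
  fun i j =>
    if i = j then (if (i : ℕ) = 0 then e else if (i : ℕ) = n - 1 then f else 0)
    else if (i : ℕ) + 1 = (j : ℕ) ∨ (j : ℕ) + 1 = (i : ℕ) then 1 else 0

/-- `x` is an eigenvalue of `T_{n,ε,φ}`. -/
def HasEigen (n : ℕ) (e f x : ℝ) : Prop :=
  ∃ v : Fin n → ℝ, v ≠ 0 ∧ (Ttri n e f).mulVec v = x • v

lemma trig_id (θ x : ℝ) :
    Real.sin ((x+1)*θ) + Real.sin ((x-1)*θ) = 2 * Real.cos θ * Real.sin (x*θ) := by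
  rw [show (x+1)*θ = x*θ+θ by ring, show (x-1)*θ = x*θ-θ by ring,
    Real.sin_add, Real.sin_sub]; ring

lemma mulVec_Ttri (n : ℕ) (e f : ℝ) (v : Fin n → ℝ) (i : Fin n) :
    (Ttri n e f).mulVec v i =
      (if (i:ℕ) = 0 then e else if (i:ℕ) = n - 1 then f else 0) * v i
      + (if h : 0 < (i:ℕ) then v ⟨(i:ℕ)-1, by have := i.isLt; omega⟩ else 0)
      + (if h : (i:ℕ)+1 < n then v ⟨(i:ℕ)+1, h⟩ else 0) := by
  classical
  have key : ∀ j : Fin n, Ttri n e f i j * v j =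
      (if j = i then (if (i:ℕ) = 0 then e else if (i:ℕ) = n - 1 then f else 0) * v i else 0)
      + (if (j:ℕ)+1 = (i:ℕ) then v j else 0)
      + (if (i:ℕ)+1 = (j:ℕ) then v j else 0) := by
    intro j
    simp only [Ttri, Fin.ext_iff]
    split_ifs <;> simp_all [Fin.ext_iff] <;> try omega
    all_goals exact Or.inl (congrArg v (Fin.ext (by omega)))
  show ∑ j, Ttri n e f i j * v j = _
  rw [Finset.sum_congr rfl (fun j _ => key j)]
  rw [Finset.sum_add_distrib, Finset.sum_add_distrib, Finset.sum_ite_eq' Finset.univ i]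
  simp only [Finset.mem_univ, if_true]
  congr 1
  · congr 1
    by_cases h : 0 < (i:ℕ)
    · rw [dif_pos h]
      have : ∀ j : Fin n, ((j:ℕ)+1 = (i:ℕ)) ↔ j = ⟨(i:ℕ)-1, by have := i.isLt; omega⟩ := by
        intro j; rw [Fin.ext_iff]; simp; omega
      rw [Finset.sum_congr rfl (fun j _ => by rw [if_congr (this j) rfl rfl]),
        Finset.sum_ite_eq' Finset.univ]
      simp
    · rw [dif_neg h]
      apply Finset.sum_eq_zero
      intro j _
      rw [if_neg]; omega
  · by_cases h : (i:ℕ)+1 < n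
    · rw [dif_pos h]
      have : ∀ j : Fin n, ((i:ℕ)+1 = (j:ℕ)) ↔ j = ⟨(i:ℕ)+1, h⟩ := by
        intro j; rw [Fin.ext_iff]; simp; omega
      rw [Finset.sum_congr rfl (fun j _ => by rw [if_congr (this j) rfl rfl]),
        Finset.sum_ite_eq' Finset.univ]
      simp
    · rw [dif_neg h]
      apply Finset.sum_eq_zero
      intro j _
      rw [if_neg]; have := j.isLt; omega

lemma part2 (n : ℕ) (hn : 2 ≤ n) (e f θ : ℝ) (hθ0 : 0 < θ) (hθπ : θ < π)
    (H : Real.sin (((n : ℝ) + 1) * θ) - (e + f) * Real.sin ((n : ℝ) * θ) +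
        e * f * Real.sin (((n : ℝ) - 1) * θ) = 0) :
    ((fun i : Fin n =>
        Real.sin (((i : ℕ) + 1 : ℝ) * θ) - e * Real.sin ((i : ℕ) * θ)) : Fin n → ℝ) ≠ 0 ∧
    (Ttri n e f).mulVec
        (fun i : Fin n =>
          Real.sin (((i : ℕ) + 1 : ℝ) * θ) - e * Real.sin ((i : ℕ) * θ)) =
      (2 * Real.cos θ) •
        ((fun i : Fin n =>
          Real.sin (((i : ℕ) + 1 : ℝ) * θ) - e * Real.sin ((i : ℕ) * θ)) : Fin n → ℝ) := by
  have hsin : Real.sin θ ≠ 0 := ne_of_gt (Real.sin_pos_of_pos_of_lt_pi hθ0 hθπ)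
  constructor
  · intro h
    have h0 := congrFun h ⟨0, by omega⟩
    simp at h0
    exact hsin h0
  · funext i
    rw [mulVec_Ttri]
    simp only [Pi.smul_apply, smul_eq_mul]
    by_cases h0 : (i:ℕ) = 0
    · rw [if_pos h0, dif_neg (by omega), dif_pos (by omega)]
      simp only [h0]
      push_cast
      norm_num
      rw [Real.sin_two_mul]
      ring
    · by_cases h1 : (i:ℕ) = n - 1
      · rw [if_neg h0, if_pos h1, dif_pos (by omega), dif_neg (by omega)]
        simp only [h1]
        have hc1 : ((n - 1 - 1 : ℕ) : ℝ) = (n:ℝ) - 2 := by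
          rw [show n - 1 - 1 = n - 2 from by omega, Nat.cast_sub (by omega : 2 ≤ n)]; norm_num
        have hc2 : ((n - 1 : ℕ) : ℝ) = (n:ℝ) - 1 := by
          rw [Nat.cast_sub (by omega : 1 ≤ n)]; norm_num
        rw [hc1, hc2]
        have t1 := trig_id θ ((n:ℝ) - 1)
        have t2 := trig_id θ (n:ℝ)
        linear_combination (norm := ring_nf) t2 - e * t1 - H
      · rw [if_neg h0, if_neg h1, dif_pos (by omega), dif_pos (by have := i.isLt; omega)]
        have hc1 : (((i:ℕ) - 1 : ℕ) : ℝ) = ((i:ℕ):ℝ) - 1 := by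
          rw [Nat.cast_sub (by omega : 1 ≤ (i:ℕ))]; norm_num
        push_cast
        rw [hc1]
        have t1 := trig_id θ (((i:ℕ):ℝ))
        have t2 := trig_id θ (((i:ℕ):ℝ) + 1)
        linear_combination (norm := ring_nf) t2 - e * t1

lemma part1 (n : ℕ) (hn : 2 ≤ n) (e f θ : ℝ) (hθ0 : 0 < θ) (hθπ : θ < π)
    (w : Fin n → ℝ) (hw0 : w ≠ 0)
    (hw : (Ttri n e f).mulVec w = (2 * Real.cos θ) • w) :
    Real.sin (((n : ℝ) + 1) * θ) - (e + f) * Real.sin ((n : ℝ) * θ) +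
        e * f * Real.sin (((n : ℝ) - 1) * θ) = 0 := by
  have hsin : Real.sin θ ≠ 0 := ne_of_gt (Real.sin_pos_of_pos_of_lt_pi hθ0 hθπ)
  have row : ∀ i : Fin n,
      (if (i:ℕ) = 0 then e else if (i:ℕ) = n - 1 then f else 0) * w i
      + (if h : 0 < (i:ℕ) then w ⟨(i:ℕ)-1, by have := i.isLt; omega⟩ else 0)
      + (if h : (i:ℕ)+1 < n then w ⟨(i:ℕ)+1, h⟩ else 0) = (2 * Real.cos θ) * w i := by
    intro i
    have := congrFun hw i
    rw [mulVec_Ttri] at this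
    simpa using this
  set w0 : ℝ := w ⟨0, by omega⟩ with hw0def
  -- key recurrence
  have key : ∀ k, ∀ hk : k < n, w ⟨k, hk⟩ * Real.sin θ
      = w0 * (Real.sin (((k:ℝ)+1)*θ) - e * Real.sin ((k:ℝ)*θ)) := by
    intro k
    induction k using Nat.twoStepInduction with
    | zero =>
      intro hk
      simp
      exact Or.inl rfl
    | one =>
      intro hk
      have r0 := row ⟨0, by omega⟩
      rw [dif_neg (by simp), dif_pos (by omega), if_pos (by simp)] at r0
      push_cast
      have h2 : Real.sin (2*θ) = 2 * Real.sin θ * Real.cos θ := Real.sin_two_mul θ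
      have : w ⟨1, hk⟩ = 2 * Real.cos θ * w0 - e * w0 := by
        simp at r0
        linarith [r0]
      rw [this]
      norm_num
      rw [h2]
      ring
    | more k ih1 ih2 =>
      intro hk
      have rk := row ⟨k+1, by omega⟩
      rw [dif_pos (by simp), dif_pos (by simpa using hk), if_neg (by simp),
        if_neg (by simp; omega)] at rk
      simp only [zero_mul, zero_add] at rk
      have e1 := ih1 (by omega)
      have e2 := ih2 (by omega)
      have hfin : (⟨k+1-1, by omega⟩ : Fin n) = ⟨k, by omega⟩ := by simp
      rw [hfin] at rk
      have t := trig_id θ ((k:ℝ)+1)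
      have t' := trig_id θ ((k:ℝ)+2)
      push_cast at e1 e2 ⊢
      linear_combination (norm := ring_nf) Real.sin θ * rk - e1 + 2*Real.cos θ * e2 - w0 * t' + e * w0 * t
  -- w0 ≠ 0
  have hw0ne : w0 ≠ 0 := by
    intro h
    apply hw0
    funext i
    have := key i (i.isLt)
    rw [h] at this
    simp at this
    rcases this with h' | h'
    · simpa using h'
    · exact absurd h' hsin
  -- last row
  have rl := row ⟨n-1, by omega⟩
  rw [dif_pos (by simp; omega), dif_neg (by simp; omega), if_neg (by simp; omega),
    if_pos (by simp)] at rl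
  have e1 := key (n-2) (by omega)
  have e2 := key (n-1) (by omega)
  have hfin : (⟨n-1-1, by omega⟩ : Fin n) = ⟨n-2, by omega⟩ := by simp; omega
  rw [hfin] at rl
  have hc1 : ((n - 1 : ℕ) : ℝ) = (n:ℝ) - 1 := by
    rw [Nat.cast_sub (by omega : 1 ≤ n)]; norm_num
  have hc2 : ((n - 2 : ℕ) : ℝ) = (n:ℝ) - 2 := by
    rw [Nat.cast_sub (by omega : 2 ≤ n)]; norm_num
  rw [hc1] at e2
  rw [hc2] at e1
  have t1 := trig_id θ (n:ℝ)
  have t2 := trig_id θ ((n:ℝ) - 1)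
  have main : w0 * (Real.sin (((n : ℝ) + 1) * θ) - (e + f) * Real.sin ((n : ℝ) * θ) +
      e * f * Real.sin (((n : ℝ) - 1) * θ)) = 0 := by
    linear_combination (norm := ring_nf) (-Real.sin θ) * rl + e1 + f * e2
      - (2*Real.cos θ) * e2 + w0 * t1 - e * w0 * t2
  rcases mul_eq_zero.mp main with h | h
  · exact absurd h hw0ne
  · exact h

theorem stmt12 (n : ℕ) (hn : 2 ≤ n) (e f θ : ℝ) (hθ : θ ∈ Set.Ioo 0 π) :
    (HasEigen n e f (2 * Real.cos θ) ↔
      Real.sin (((n : ℝ) + 1) * θ) - (e + f) * Real.sin ((n : ℝ) * θ) +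
        e * f * Real.sin (((n : ℝ) - 1) * θ) = 0) ∧
    (Real.sin (((n : ℝ) + 1) * θ) - (e + f) * Real.sin ((n : ℝ) * θ) +
        e * f * Real.sin (((n : ℝ) - 1) * θ) = 0 →
      ((fun i : Fin n =>
          Real.sin (((i : ℕ) + 1 : ℝ) * θ) - e * Real.sin ((i : ℕ) * θ)) : Fin n → ℝ) ≠ 0 ∧
      (Ttri n e f).mulVec
          (fun i : Fin n =>
            Real.sin (((i : ℕ) + 1 : ℝ) * θ) - e * Real.sin ((i : ℕ) * θ)) =
        (2 * Real.cos θ) •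
          ((fun i : Fin n =>
            Real.sin (((i : ℕ) + 1 : ℝ) * θ) - e * Real.sin ((i : ℕ) * θ)) : Fin n → ℝ)) := by
  obtain ⟨hθ0, hθπ⟩ := hθ
  constructor
  · constructor
    · rintro ⟨v, hv0, hv⟩
      exact part1 n hn e f θ hθ0 hθπ v hv0 hv
    · intro H
      obtain ⟨h1, h2⟩ := part2 n hn e f θ hθ0 hθπ H
      exact ⟨_, h1, h2⟩
  · intro H
    exact part2 n hn e f θ hθ0 hθπ H
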